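/- arXiv:0802.1121 — 3 statements merged into one kernel-verified Lean document; each statement's English description precedes it below -/
import Mathlib

section
/- Let (u_{σ,τ}) be a time-consistent dynamic concave monetary utility with acceptance sets A_{σ,τ} = {ξ ∈ L^∞(F_τ) : u_{σ,τ}(ξ) ≥ 0} and penalty c_{σ,τ}(Q) = ess sup_{ξ ∈ A_{σ,τ}} E_Q[−ξ | F_σ]. Fix ε > 0 and ξ ∈ A_{0,T} with E_Q[−ξ] > c_{0,T}(Q) − ε. Then for all stopping times σ ≤ τ ≤ T: E_Q[c_{σ,τ}(Q)] ≤ E_Q[u_{σ,T}(ξ) − u_{τ,T}(ξ)] + ε. -/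
open MeasureTheory

variable {Ω : Type*} {m : MeasurableSpace Ω}

/-- `ξ ∈ L^∞(F_σ)` for a stopping time `σ`: bounded and `F_σ`-measurable. -/
def MemLinfty {ℱ : Filtration ℝ m} {σ : Ω → ℝ} (hσ : IsStoppingTime ℱ (fun ω => (σ ω : WithTop ℝ)))
    (ξ : Ω → ℝ) : Prop :=
  StronglyMeasurable[hσ.measurableSpace] ξ ∧ ∃ M : ℝ, ∀ ω, |ξ ω| ≤ M

lemma MemLinfty.neg' {ℱ : Filtration ℝ m} {σ : Ω → ℝ} {hσ : IsStoppingTime ℱ (fun ω => (σ ω : WithTop ℝ))}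
    {ξ : Ω → ℝ} (h : MemLinfty hσ ξ) : MemLinfty hσ (-ξ) := by
  obtain ⟨hm, M, hM⟩ := h
  exact ⟨hm.neg, M, fun ω => by simpa using hM ω⟩

lemma MemLinfty.integrable' {ℱ : Filtration ℝ m} {σ : Ω → ℝ} {hσ : IsStoppingTime ℱ (fun ω => (σ ω : WithTop ℝ))}
    {ξ : Ω → ℝ} (h : MemLinfty hσ ξ) (Q : Measure Ω) [IsFiniteMeasure Q] :
    Integrable ξ Q := by
  obtain ⟨hm, M, hM⟩ := h
  exact Integrable.mono' (integrable_const M)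
    ((hm.mono hσ.measurableSpace_le).aestronglyMeasurable)
    (Filter.Eventually.of_forall fun ω => by simpa [Real.norm_eq_abs] using hM ω)

/-- for a time-consistent dynamic concave monetary utility with penalty
`c`, if `ξ ∈ A_{0,T}` is an `ε`-optimizer of `c_{0,T}(Q)`, then for all stopping times
`σ ≤ τ ≤ T` one has `E_Q[c_{σ,τ}] ≤ E_Q[u_{σ,T}(ξ) − u_{τ,T}(ξ)] + ε`. -/
theorem penalty_expectation_estimate
    (Q : Measure Ω) [IsProbabilityMeasure Q]
    (ℱ : Filtration ℝ m) (T : ℝ) (hT : 0 < T)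
    -- the dynamic utility `u σ τ ξ` and the penalty `c σ τ`
    (u : (Ω → ℝ) → (Ω → ℝ) → (Ω → ℝ) → Ω → ℝ)
    (c : (Ω → ℝ) → (Ω → ℝ) → Ω → ℝ)
    -- `u σ τ` maps `L^∞(F_τ)` into `L^∞(F_σ)`
    (humap : ∀ (σ τ : Ω → ℝ) (hσ : IsStoppingTime ℱ (fun ω => (σ ω : WithTop ℝ))) (hτ : IsStoppingTime ℱ (fun ω => (τ ω : WithTop ℝ))),
      (∀ ω, σ ω ≤ τ ω) → ∀ ξ, MemLinfty hτ ξ → MemLinfty hσ (u σ τ ξ))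
    -- monotonicity
    (hmono : ∀ (σ τ : Ω → ℝ), IsStoppingTime ℱ (fun ω => (σ ω : WithTop ℝ)) → IsStoppingTime ℱ (fun ω => (τ ω : WithTop ℝ)) →
      ∀ ξ η : Ω → ℝ, ξ ≤ᵐ[Q] η → u σ τ ξ ≤ᵐ[Q] u σ τ η)
    -- translation invariance
    (htransl : ∀ (σ τ : Ω → ℝ) (hσ : IsStoppingTime ℱ (fun ω => (σ ω : WithTop ℝ))) (hτ : IsStoppingTime ℱ (fun ω => (τ ω : WithTop ℝ))),
      ∀ ξ η : Ω → ℝ, MemLinfty hτ ξ → MemLinfty hσ η →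
      u σ τ (ξ + η) =ᵐ[Q] u σ τ ξ + η)
    -- concavity
    (hconc : ∀ (σ τ : Ω → ℝ), IsStoppingTime ℱ (fun ω => (σ ω : WithTop ℝ)) → IsStoppingTime ℱ (fun ω => (τ ω : WithTop ℝ)) →
      ∀ (ξ η : Ω → ℝ) (a : ℝ), 0 ≤ a → a ≤ 1 →
      (fun ω => a * u σ τ ξ ω + (1 - a) * u σ τ η ω) ≤ᵐ[Q]
        u σ τ (fun ω => a * ξ ω + (1 - a) * η ω))
    -- normalization
    (hzero : ∀ σ τ : Ω → ℝ, u σ τ 0 =ᵐ[Q] 0)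
    -- time-consistency
    (htc : ∀ (σ τ υ : Ω → ℝ), IsStoppingTime ℱ (fun ω => (σ ω : WithTop ℝ)) → IsStoppingTime ℱ (fun ω => (τ ω : WithTop ℝ)) →
      IsStoppingTime ℱ (fun ω => (υ ω : WithTop ℝ)) → (∀ ω, σ ω ≤ τ ω) → (∀ ω, τ ω ≤ υ ω) →
      (∀ ω, υ ω ∈ Set.Icc (0 : ℝ) T) →
      ∀ ξ : Ω → ℝ, u σ υ ξ =ᵐ[Q] u σ τ (u τ υ ξ))
    -- `c σ τ` is the essential supremum over the acceptance set `A_{σ,τ}`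
    (hcint : ∀ σ τ : Ω → ℝ, Integrable (c σ τ) Q)
    (hcub : ∀ (σ τ : Ω → ℝ) (hσ : IsStoppingTime ℱ (fun ω => (σ ω : WithTop ℝ))) (hτ : IsStoppingTime ℱ (fun ω => (τ ω : WithTop ℝ))),
      ∀ ξ : Ω → ℝ, MemLinfty hτ ξ → 0 ≤ᵐ[Q] u σ τ ξ →
      Q[fun ω => -ξ ω | hσ.measurableSpace] ≤ᵐ[Q] c σ τ)
    (hclub : ∀ (σ τ : Ω → ℝ) (hσ : IsStoppingTime ℱ (fun ω => (σ ω : WithTop ℝ))) (hτ : IsStoppingTime ℱ (fun ω => (τ ω : WithTop ℝ))),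
      ∀ b : Ω → ℝ,
      (∀ ξ : Ω → ℝ, MemLinfty hτ ξ → 0 ≤ᵐ[Q] u σ τ ξ →
        Q[fun ω => -ξ ω | hσ.measurableSpace] ≤ᵐ[Q] b) →
      c σ τ ≤ᵐ[Q] b)
    -- cocycle property of the penalty (in expectation)
    (hcocycle : ∀ (σ τ : Ω → ℝ), IsStoppingTime ℱ (fun ω => (σ ω : WithTop ℝ)) → IsStoppingTime ℱ (fun ω => (τ ω : WithTop ℝ)) →
      (∀ ω, σ ω ≤ τ ω) → (∀ ω, τ ω ∈ Set.Icc (0 : ℝ) T) →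
      ∫ ω, c (fun _ => (0 : ℝ)) (fun _ => T) ω ∂Q =
        ∫ ω, c (fun _ => (0 : ℝ)) σ ω ∂Q + ∫ ω, c σ τ ω ∂Q +
          ∫ ω, c τ (fun _ => T) ω ∂Q)
    -- the `ε`-optimizer `ξ ∈ A_{0,T}`
    (ε : ℝ) (hε : 0 < ε) (ξ : Ω → ℝ)
    (hξmem : MemLinfty (isStoppingTime_const ℱ T) ξ)
    (hξacc : 0 ≤ᵐ[Q] u (fun _ => (0 : ℝ)) (fun _ => T) ξ)
    (hξopt : ∫ ω, c (fun _ => (0 : ℝ)) (fun _ => T) ω ∂Q - ε < ∫ ω, -ξ ω ∂Q) :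
    ∀ (σ τ : Ω → ℝ), IsStoppingTime ℱ (fun ω => (σ ω : WithTop ℝ)) → IsStoppingTime ℱ (fun ω => (τ ω : WithTop ℝ)) →
      (∀ ω, σ ω ≤ τ ω) → (∀ ω, τ ω ∈ Set.Icc (0 : ℝ) T) → (∀ ω, 0 ≤ σ ω) →
      ∫ ω, c σ τ ω ∂Q ≤
        ∫ ω, (u σ (fun _ => T) ξ ω - u τ (fun _ => T) ξ ω) ∂Q + ε := by
  intro σ τ hσ hτ hστ hτIcc hσ0
  have hT0 : (0 : ℝ) ≤ T := hT.le
  have hτT : ∀ ω, τ ω ≤ T := fun ω => (hτIcc ω).2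
  have hσT : ∀ ω, σ ω ≤ T := fun ω => (hστ ω).trans (hτT ω)
  set Tst : Ω → ℝ := fun _ => T with hTdef
  have hTst : IsStoppingTime ℱ (fun ω => (Tst ω : WithTop ℝ)) := isStoppingTime_const ℱ T
  have h0st : IsStoppingTime ℱ (fun _ => ((0 : ℝ) : WithTop ℝ)) := isStoppingTime_const ℱ 0
  -- membership facts
  have huσ : MemLinfty hσ (u σ Tst ξ) := humap σ Tst hσ hTst hσT ξ hξmem
  have huτ : MemLinfty hτ (u τ Tst ξ) := humap τ Tst hτ hTst hτT ξ hξmem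
  -- measurable space comparisons
  have hτle : hτ.measurableSpace ≤ hTst.measurableSpace :=
    IsStoppingTime.measurableSpace_mono hτ hTst (fun ω => WithTop.coe_le_coe.mpr (hτT ω))
  -- η₁ := ξ + (-(u τ T ξ)) ∈ A_{τ,T}
  set η₁ : Ω → ℝ := ξ + (-(u τ Tst ξ)) with hη₁def
  have hη₁mem : MemLinfty hTst η₁ := by
    obtain ⟨hmξ, M₁, hM₁⟩ := hξmem
    obtain ⟨hmu, M₂, hM₂⟩ := huτ
    refine ⟨hmξ.add ((hmu.mono hτle).neg), M₁ + M₂, fun ω => ?_⟩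
    calc |ξ ω + -(u τ Tst ξ ω)| ≤ |ξ ω| + |u τ Tst ξ ω| := by
          simpa using abs_add_le (ξ ω) (-(u τ Tst ξ ω))
      _ ≤ M₁ + M₂ := add_le_add (hM₁ ω) (hM₂ ω)
  have hη₁acc : 0 ≤ᵐ[Q] u τ Tst η₁ := by
    have h := htransl τ Tst hτ hTst ξ (-(u τ Tst ξ)) hξmem huτ.neg'
    filter_upwards [h] with ω hω
    have : u τ Tst ξ ω + (-(u τ Tst ξ)) ω = 0 := by simp
    rw [hω]
    simp [this]
  have hcub₁ := hcub τ Tst hτ hTst η₁ hη₁mem hη₁acc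
  -- η₃ := u σ T ξ ∈ A_{0,σ}
  have hη₃acc : 0 ≤ᵐ[Q] u (fun _ => (0 : ℝ)) σ (u σ Tst ξ) := by
    have h := htc (fun _ => (0 : ℝ)) σ Tst h0st hσ hTst hσ0 hσT
      (fun ω => ⟨hT0, le_refl T⟩) ξ
    filter_upwards [h, hξacc] with ω h1 h2
    rw [← h1]; exact h2
  have hcub₃ := hcub (fun _ => (0 : ℝ)) σ h0st hσ (u σ Tst ξ) huσ hη₃acc
  -- integrability
  have hintξ : Integrable ξ Q := hξmem.integrable' Q
  have hintuσ : Integrable (u σ Tst ξ) Q := huσ.integrable' Q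
  have hintuτ : Integrable (u τ Tst ξ) Q := huτ.integrable' Q
  have hintη₁ : Integrable η₁ Q := hη₁mem.integrable' Q
  -- integrate hcub₁
  have h1 : ∫ ω, (-ξ ω + u τ Tst ξ ω) ∂Q ≤ ∫ ω, c τ Tst ω ∂Q := by
    have hle : ∫ ω, (Q[fun ω => -η₁ ω|hτ.measurableSpace]) ω ∂Q ≤ ∫ ω, c τ Tst ω ∂Q :=
      integral_mono_ae integrable_condExp (hcint τ Tst) hcub₁
    have heq : ∫ ω, (Q[fun ω => -η₁ ω|hτ.measurableSpace]) ω ∂Q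
        = ∫ ω, -η₁ ω ∂Q := integral_condExp hτ.measurableSpace_le
    have : (fun ω => -η₁ ω) = fun ω => -ξ ω + u τ Tst ξ ω := by
      funext ω; simp [hη₁def]; ring
    rw [heq, this] at hle
    exact hle
  have h3 : ∫ ω, -(u σ Tst ξ) ω ∂Q ≤ ∫ ω, c (fun _ => (0 : ℝ)) σ ω ∂Q := by
    have hle : ∫ ω, (Q[fun ω => -(u σ Tst ξ) ω|h0st.measurableSpace]) ω ∂Q
        ≤ ∫ ω, c (fun _ => (0 : ℝ)) σ ω ∂Q :=
      integral_mono_ae integrable_condExp (hcint (fun _ => (0 : ℝ)) σ) hcub₃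
    have heq : ∫ ω, (Q[fun ω => -(u σ Tst ξ) ω|h0st.measurableSpace]) ω ∂Q
        = ∫ ω, -(u σ Tst ξ) ω ∂Q := integral_condExp h0st.measurableSpace_le
    rw [heq] at hle
    exact hle
  -- cocycle
  have hcoc := hcocycle σ τ hσ hτ hστ hτIcc
  -- unfold integrals
  have e1 : ∫ ω, (-ξ ω + u τ Tst ξ ω) ∂Q = -(∫ ω, ξ ω ∂Q) + ∫ ω, u τ Tst ξ ω ∂Q := by
    simpa [integral_neg] using integral_add hintξ.neg hintuτ
  have e3 : ∫ ω, -(u σ Tst ξ) ω ∂Q = -(∫ ω, u σ Tst ξ ω ∂Q) := by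
    simpa using integral_neg (u σ Tst ξ)
  have e4 : ∫ ω, -ξ ω ∂Q = -(∫ ω, ξ ω ∂Q) := integral_neg ξ
  have e5 : ∫ ω, (u σ Tst ξ ω - u τ Tst ξ ω) ∂Q
      = ∫ ω, u σ Tst ξ ω ∂Q - ∫ ω, u τ Tst ξ ω ∂Q := integral_sub hintuσ hintuτ
  rw [e1] at h1
  rw [e3] at h3
  rw [e4] at hξopt
  show ∫ ω, c σ τ ω ∂Q ≤ ∫ ω, (u σ Tst ξ ω - u τ Tst ξ ω) ∂Q + ε
  rw [e5]
  have hcoc' : ∫ ω, c (fun _ => (0 : ℝ)) Tst ω ∂Q =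
      ∫ ω, c (fun _ => (0 : ℝ)) σ ω ∂Q + ∫ ω, c σ τ ω ∂Q + ∫ ω, c τ Tst ω ∂Q := hcoc
  have hξopt' : ∫ ω, c (fun _ => (0 : ℝ)) Tst ω ∂Q - ε < -(∫ ω, ξ ω ∂Q) := hξopt
  linarith
end

section
/- Let Q ∼ P with c_{0,T}(Q) < ∞, where c_{0,T} : {probabilities ≪ P} → [0,∞] is lower semicontinuous with respect to L^1-convergence of densities and satisfies the cocycle property c_{0,T}(Q) = c_{0,τ}(Q) + E_Q[c_{τ,T}(Q)]. If (τ_n) is a sequence of stopping times with P(τ_n < T) → 0, and Q^{τ_n} is defined by dQ^{τ_n}/dP = E_P[dQ/dP | F_{τ_n}], then c_{0,T}(Q^{τ_n}) → c_{0,T}(Q), and moreover c_{0,T}(Q^{τ_n}) ≤ c_{0,T}(Q) for all n. -/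
open MeasureTheory Filter
open scoped ENNReal

/-- Key L¹ bound: the conditional expectation w.r.t. the stopping-time σ-algebra differs
from `Z` only through the part of `Z` on `{τ < T}`. -/
lemma stopped_condexp_L1_bound
    {Ω : Type*} {m : MeasurableSpace Ω} (P : Measure Ω) [IsProbabilityMeasure P]
    (ℱ : Filtration ℝ m) (T : ℝ)
    (Z : Ω → ℝ) (hZmeas : StronglyMeasurable[ℱ T] Z) (hZint : Integrable Z P)
    (τ : Ω → ℝ) (hτ : IsStoppingTime ℱ (fun ω => (τ ω : WithTop ℝ))) (hτT : ∀ ω, τ ω ∈ Set.Icc (0 : ℝ) T) :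
    ∫ ω, |(P[Z | hτ.measurableSpace]) ω - Z ω| ∂P
      ≤ 2 * ∫ ω in {ω | τ ω < T}, |Z ω| ∂P := by
  classical
  have hle : hτ.measurableSpace ≤ m := hτ.measurableSpace_le
  set A : Set Ω := {ω | (τ ω : WithTop ℝ) = (T : WithTop ℝ)} with hA
  have hA_FT : MeasurableSet[ℱ T] A := hτ.measurableSet_eq T
  have hA_G : MeasurableSet[hτ.measurableSpace] A := hτ.measurableSet_eq' T
  have hA_m : MeasurableSet[m] A := hle A hA_G
  have hAc : Aᶜ = {ω | τ ω < T} := by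
    ext ω
    simp only [hA, Set.mem_compl_iff, Set.mem_setOf_eq, WithTop.coe_eq_coe]
    constructor
    · intro h; exact lt_of_le_of_ne (hτT ω).2 h
    · intro h; exact ne_of_lt h
  -- sets of `F_T` intersected with `{τ = T}` lie in the stopping σ-algebra
  have hinter : ∀ s : Set Ω, MeasurableSet[ℱ T] s →
      MeasurableSet[hτ.measurableSpace] (s ∩ A) := by
    intro s hs
    exact (hτ.measurableSet_inter_eq_iff s T).mpr (hs.inter hA_FT)
  -- `1_A · Z` is measurable w.r.t. the stopping σ-algebra
  have hZ1meas : Measurable[hτ.measurableSpace] (A.indicator Z) := by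
    intro s hs
    have hpre : A.indicator Z ⁻¹' s =
        (Z ⁻¹' s ∩ A) ∪ (if (0 : ℝ) ∈ s then Aᶜ else ∅) := by
      ext ω
      by_cases hω : ω ∈ A <;> by_cases h0 : (0 : ℝ) ∈ s <;>
        simp [Set.indicator_apply, hω, h0]
    rw [hpre]
    refine MeasurableSet.union (hinter _ (hZmeas.measurable hs)) ?_
    split_ifs
    · exact hA_G.compl
    · exact @MeasurableSet.empty Ω hτ.measurableSpace
  have hZ1int : Integrable (A.indicator Z) P := hZint.indicator hA_m
  have hZ2int : Integrable (Aᶜ.indicator Z) P := hZint.indicator hA_m.compl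
  have hsum : A.indicator Z + Aᶜ.indicator Z = Z := Set.indicator_self_add_compl A Z
  -- conditional expectation decomposition
  have hce1 : P[A.indicator Z | hτ.measurableSpace] = A.indicator Z :=
    condExp_of_stronglyMeasurable hle hZ1meas.stronglyMeasurable hZ1int
  have hce : P[Z | hτ.measurableSpace]
      =ᵐ[P] fun ω => A.indicator Z ω + (P[Aᶜ.indicator Z | hτ.measurableSpace]) ω := by
    have h1 : P[Z | hτ.measurableSpace]
        = P[A.indicator Z + Aᶜ.indicator Z | hτ.measurableSpace] := by rw [hsum]
    rw [h1]
    refine (condExp_add hZ1int hZ2int _).trans ?_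
    rw [hce1]
    exact Filter.EventuallyEq.of_eq rfl
  have hdiff : (fun ω => |(P[Z | hτ.measurableSpace]) ω - Z ω|)
      =ᵐ[P] fun ω => |(P[Aᶜ.indicator Z | hτ.measurableSpace]) ω - Aᶜ.indicator Z ω| := by
    filter_upwards [hce] with ω hω
    have hz : Z ω = A.indicator Z ω + Aᶜ.indicator Z ω := (congrFun hsum ω).symm
    rw [hω, hz]
    ring_nf
  have hCEint : Integrable (P[Aᶜ.indicator Z | hτ.measurableSpace]) P := integrable_condExp
  calc ∫ ω, |(P[Z | hτ.measurableSpace]) ω - Z ω| ∂P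
      = ∫ ω, |(P[Aᶜ.indicator Z | hτ.measurableSpace]) ω - Aᶜ.indicator Z ω| ∂P :=
        integral_congr_ae hdiff
    _ ≤ ∫ ω, (|(P[Aᶜ.indicator Z | hτ.measurableSpace]) ω| + |Aᶜ.indicator Z ω|) ∂P := by
        refine integral_mono ((hCEint.sub hZ2int).abs) (hCEint.abs.add hZ2int.abs) ?_
        intro ω
        exact abs_sub _ _
    _ = ∫ ω, |(P[Aᶜ.indicator Z | hτ.measurableSpace]) ω| ∂P + ∫ ω, |Aᶜ.indicator Z ω| ∂P :=
        integral_add hCEint.abs hZ2int.abs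
    _ ≤ ∫ ω, |Aᶜ.indicator Z ω| ∂P + ∫ ω, |Aᶜ.indicator Z ω| ∂P := by
        exact add_le_add_left (integral_abs_condExp_le _) _
    _ = 2 * ∫ ω, |Aᶜ.indicator Z ω| ∂P := by ring
    _ = 2 * ∫ ω in {ω | τ ω < T}, |Z ω| ∂P := by
        have h1 : ∫ ω, |Aᶜ.indicator Z ω| ∂P = ∫ ω in Aᶜ, |Z ω| ∂P := by
          rw [← integral_indicator hA_m.compl]
          congr 1
          ext ω
          by_cases hω : ω ∈ Aᶜ <;> simp [Set.indicator_apply, hω]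
        rw [h1, hAc]

/-- if `c_{0,T}` is `L¹`-lower semicontinuous on densities, satisfies the
cocycle property (so that stopping the density decreases the penalty), and
`c_{0,T}(Q) < ∞`, then for stopping times `τ_n` with `P(τ_n < T) → 0` the stopped
measures `Q^{τ_n}` (with density `E_P[dQ/dP | F_{τ_n}]`) satisfy
`c_{0,T}(Q^{τ_n}) ≤ c_{0,T}(Q)` and `c_{0,T}(Q^{τ_n}) → c_{0,T}(Q)`. -/
theorem penalty_of_stopped_measures_tendsto
    {Ω : Type*} {m : MeasurableSpace Ω} (P : Measure Ω) [IsProbabilityMeasure P]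
    (ℱ : Filtration ℝ m) (T : ℝ) (hT : 0 < T)
    (c : (Ω → ℝ) → ℝ≥0∞)
    -- the density `Z = dQ/dP` of a probability `Q ∼ P`, measurable at the horizon
    (Z : Ω → ℝ)
    (hZmeas : StronglyMeasurable[ℱ T] Z) (hZint : Integrable Z P)
    (hZpos : ∀ᵐ ω ∂P, 0 < Z ω) (hZone : ∫ ω, Z ω ∂P = 1)
    (hfin : c Z < ∞)
    -- lower semicontinuity of `c` with respect to `L¹(P)`-convergence of densities
    (hlsc : ∀ (W : ℕ → Ω → ℝ) (Wlim : Ω → ℝ),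
      Tendsto (fun n => ∫ ω, |W n ω - Wlim ω| ∂P) atTop (nhds 0) →
      c Wlim ≤ liminf (fun n => c (W n)) atTop)
    -- cocycle property: `c(Q) = c(Q^τ) + E_Q[c_{τ,T}(Q)]` with a nonnegative remainder
    (hcocycle : ∀ (τ : Ω → ℝ) (hτ : IsStoppingTime ℱ (fun ω => (τ ω : WithTop ℝ))),
      (∀ ω, τ ω ∈ Set.Icc (0 : ℝ) T) →
      ∃ r : ℝ≥0∞, c Z = c (P[Z | hτ.measurableSpace]) + r)
    -- the sequence of stopping times
    (τ : ℕ → Ω → ℝ) (hτ : ∀ n, IsStoppingTime ℱ (fun ω => (τ n ω : WithTop ℝ)))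
    (hτT : ∀ n ω, τ n ω ∈ Set.Icc (0 : ℝ) T)
    (hτlim : Tendsto (fun n => P {ω | τ n ω < T}) atTop (nhds 0)) :
    (∀ n, c (P[Z | (hτ n).measurableSpace]) ≤ c Z) ∧
    Tendsto (fun n => c (P[Z | (hτ n).measurableSpace])) atTop (nhds (c Z)) := by
  -- upper bound from the cocycle property
  have bound : ∀ n, c (P[Z | (hτ n).measurableSpace]) ≤ c Z := by
    intro n
    obtain ⟨r, hr⟩ := hcocycle (τ n) (hτ n) (hτT n)
    rw [hr]
    exact le_self_add
  refine ⟨bound, ?_⟩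
  -- L¹ convergence of the stopped densities
  have hset : Tendsto (fun n => 2 * ∫ ω in {ω | τ n ω < T}, |Z ω| ∂P) atTop (nhds 0) := by
    have h0 : Tendsto (fun n => ∫ ω in {ω | τ n ω < T}, |Z ω| ∂P) atTop (nhds 0) :=
      hZint.abs.tendsto_setIntegral_nhds_zero hτlim
    simpa using h0.const_mul 2
  have hL1 : Tendsto (fun n => ∫ ω, |(P[Z | (hτ n).measurableSpace]) ω - Z ω| ∂P)
      atTop (nhds 0) := by
    refine squeeze_zero (fun n => integral_nonneg fun ω => abs_nonneg _) (fun n => ?_) hset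
    exact stopped_condexp_L1_bound P ℱ T Z hZmeas hZint (τ n) (hτ n) (hτT n)
  have hli : c Z ≤ liminf (fun n => c (P[Z | (hτ n).measurableSpace])) atTop :=
    hlsc _ Z hL1
  have hls : limsup (fun n => c (P[Z | (hτ n).measurableSpace])) atTop ≤ c Z :=
    limsup_le_of_le (by isBoundedDefault) (Eventually.of_forall bound)
  exact tendsto_of_le_liminf_of_limsup_le hli hls
end

section
/- Let c : L^1(P)_{≥0,norm 1} → [0,∞] be lower semicontinuous (in L^1) with c(Z_Q) = E_Q[A_T] for an associated increasing process A whenever c(Z_Q) < ∞, and suppose for predictable sets H the measure Q^H (with Girsanov kernel q·1_H) has increasing process A^H satisfying dA^H ≤ 1_H dA. If A is bounded and H^n ↑ (0,T] × Ω are predictable sets, then c(Q^{H^n}) → c(Q). -/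
open MeasureTheory Filter
open scoped ENNReal NNReal

/-- if the penalty `c` is `L¹`-lower semicontinuous on densities, equals
`E_Q[A_T]` on the density of `Q` (with associated increasing process of bounded total
mass `A ω (0,T]`), and for predictable sets `H` the measure `Q^H` (kernel `q·1_H`, with
density `Z^H`) has increasing process satisfying `dA^H ≤ 1_H dA`, then for predictable
sets `H^n ↑ (0,T] × Ω` one has `c(Q^{H^n}) → c(Q)`. -/
theorem penalty_tendsto_along_exhaustion
    {Ω : Type*} {m : MeasurableSpace Ω} (μ : Measure Ω) [IsProbabilityMeasure μ]
    (T : ℝ) (hT : 0 < T)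
    (c : (Ω → ℝ) → ℝ≥0∞)
    -- densities of `Q^{H^n}` and of `Q`
    (Z : ℕ → Ω → ℝ) (Zlim : Ω → ℝ)
    (hZint : ∀ n, Integrable (Z n) μ) (hZlimint : Integrable Zlim μ)
    (hZnonneg : ∀ n, 0 ≤ᵐ[μ] Z n) (hZpos : ∀ᵐ ω ∂μ, 0 < Zlim ω)
    (hZone : ∀ n, ∫ ω, Z n ω ∂μ = 1) (hZlimone : ∫ ω, Zlim ω ∂μ = 1)
    (hL1 : Tendsto (fun n => ∫ ω, |Z n ω - Zlim ω| ∂μ) atTop (nhds 0))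
    -- the predictable exhaustion `H^n ↑ (0,T] × Ω`
    (H : ℕ → Set (ℝ × Ω)) (hHmono : Monotone H)
    (hHunion : (⋃ n, H n) = Set.Ioc 0 T ×ˢ (Set.univ : Set Ω))
    -- the increasing process of `Q` (as a Stieltjes measure kernel), bounded
    (A : Ω → Measure ℝ) (M : ℝ≥0)
    (hAbdd : ∀ ω, A ω (Set.Ioc 0 T) ≤ M)
    (hAmeas : ∀ s : Set ℝ, MeasurableSet s → Measurable fun ω => A ω s)
    -- the increasing processes of the `Q^{H^n}`, with `dA^{H^n} ≤ 1_{H^n} dA`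
    (AH : ℕ → Ω → Measure ℝ)
    (hAHmeas : ∀ n, ∀ s : Set ℝ, MeasurableSet s → Measurable fun ω => AH n ω s)
    (hAHle : ∀ n ω, ∀ s : Set ℝ, MeasurableSet s →
      AH n ω s ≤ A ω (s ∩ {t : ℝ | (t, ω) ∈ H n}))
    -- `c(Q) = E_Q[A_T]` and `c(Q^{H^n}) = E_{Q^{H^n}}[A^{H^n}_T]`
    (hcZ : c Zlim = ∫⁻ ω, ENNReal.ofReal (Zlim ω) * A ω (Set.Ioc 0 T) ∂μ)
    (hcZn : ∀ n, c (Z n) = ∫⁻ ω, ENNReal.ofReal (Z n ω) * AH n ω (Set.Ioc 0 T) ∂μ)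
    (hfin : c Zlim < ∞)
    -- `L¹`-lower semicontinuity of `c`
    (hlsc : ∀ (W : ℕ → Ω → ℝ) (Wlim : Ω → ℝ),
      Tendsto (fun n => ∫ ω, |W n ω - Wlim ω| ∂μ) atTop (nhds 0) →
      c Wlim ≤ liminf (fun n => c (W n)) atTop) :
    Tendsto (fun n => c (Z n)) atTop (nhds (c Zlim)) := by
  -- liminf lower bound
  have hlb : c Zlim ≤ liminf (fun n => c (Z n)) atTop := hlsc Z Zlim hL1
  -- upper bound for each n
  have hub : ∀ n, c (Z n) ≤ c Zlim + (M : ℝ≥0∞) * ENNReal.ofReal (∫ ω, |Z n ω - Zlim ω| ∂μ) := by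
    intro n
    rw [hcZn n, hcZ]
    have hsub : Integrable (fun ω => |Z n ω - Zlim ω|) μ := ((hZint n).sub hZlimint).abs
    rw [MeasureTheory.ofReal_integral_eq_lintegral_ofReal hsub
      (Filter.Eventually.of_forall fun ω => abs_nonneg _)]
    have hae : AEMeasurable (fun ω => (M : ℝ≥0∞) * ENNReal.ofReal |Z n ω - Zlim ω|) μ :=
      (ENNReal.measurable_ofReal.comp_aemeasurable hsub.aemeasurable).const_mul _
    calc ∫⁻ ω, ENNReal.ofReal (Z n ω) * AH n ω (Set.Ioc 0 T) ∂μ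
        ≤ ∫⁻ ω, (ENNReal.ofReal (Zlim ω) * A ω (Set.Ioc 0 T)
            + (M : ℝ≥0∞) * ENNReal.ofReal |Z n ω - Zlim ω|) ∂μ := by
          apply lintegral_mono
          intro ω
          have h1 : AH n ω (Set.Ioc 0 T) ≤ A ω (Set.Ioc 0 T) :=
            le_trans (hAHle n ω _ measurableSet_Ioc) (measure_mono Set.inter_subset_left)
          have h2 : ENNReal.ofReal (Z n ω) ≤
              ENNReal.ofReal (Zlim ω) + ENNReal.ofReal |Z n ω - Zlim ω| := by
            refine le_trans (ENNReal.ofReal_le_ofReal ?_) ENNReal.ofReal_add_le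
            have := le_abs_self (Z n ω - Zlim ω); linarith
          calc ENNReal.ofReal (Z n ω) * AH n ω (Set.Ioc 0 T)
              ≤ (ENNReal.ofReal (Zlim ω) + ENNReal.ofReal |Z n ω - Zlim ω|) * A ω (Set.Ioc 0 T) :=
                mul_le_mul' h2 h1
            _ = ENNReal.ofReal (Zlim ω) * A ω (Set.Ioc 0 T)
                + ENNReal.ofReal |Z n ω - Zlim ω| * A ω (Set.Ioc 0 T) := by ring
            _ ≤ ENNReal.ofReal (Zlim ω) * A ω (Set.Ioc 0 T)
                + (M : ℝ≥0∞) * ENNReal.ofReal |Z n ω - Zlim ω| := by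
                rw [mul_comm ((M : ℝ≥0∞))]
                gcongr
                exact hAbdd ω
      _ = ∫⁻ ω, ENNReal.ofReal (Zlim ω) * A ω (Set.Ioc 0 T) ∂μ
            + ∫⁻ ω, (M : ℝ≥0∞) * ENNReal.ofReal |Z n ω - Zlim ω| ∂μ :=
          lintegral_add_right' _ hae
      _ = ∫⁻ ω, ENNReal.ofReal (Zlim ω) * A ω (Set.Ioc 0 T) ∂μ
            + (M : ℝ≥0∞) * ∫⁻ ω, ENNReal.ofReal |Z n ω - Zlim ω| ∂μ := by
          rw [lintegral_const_mul' _ _ ENNReal.coe_ne_top]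
  -- limsup upper bound
  have htend : Tendsto (fun n => c Zlim + (M : ℝ≥0∞) * ENNReal.ofReal (∫ ω, |Z n ω - Zlim ω| ∂μ))
      atTop (nhds (c Zlim)) := by
    have h0 : Tendsto (fun n => (M : ℝ≥0∞) * ENNReal.ofReal (∫ ω, |Z n ω - Zlim ω| ∂μ))
        atTop (nhds 0) := by
      have := ENNReal.Tendsto.const_mul (a := (M : ℝ≥0∞)) (ENNReal.tendsto_ofReal hL1)
        (Or.inr ENNReal.coe_ne_top)
      simpa using this
    simpa using Tendsto.add (tendsto_const_nhds (x := c Zlim)) h0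
  have hub' : limsup (fun n => c (Z n)) atTop ≤ c Zlim := by
    refine le_trans (limsup_le_limsup (Filter.Eventually.of_forall hub)) ?_
    exact le_of_eq htend.limsup_eq
  exact tendsto_of_le_liminf_of_limsup_le hlb hub'
end
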